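/- Let d ≥ 3 be an integer and λ a real number. There exist real numbers p₁ ≤ p₂ ≤ ⋯ ≤ p_d and A satisfying p₁ + ⋯ + p_d = 1 and p₁² + ⋯ + p_d² + A² = 1 together with p₁ − (λ/2)A > 0 and p₁ + (λ/2)A > 0, if and only if |λ| < 2/√(d(d−1)). (The critical dilaton coupling for two 1-forms with opposite dilaton couplings ±λ in D = d + 1 spacetime dimensions is λ_c = 2/√(d(d−1)); in particular it is finite for every d, even though for a single 1-form λ_c = ∞ whenever d ≥ 9.) -/

import Mathlib

/-- The critical dilaton coupling for two 1-forms with opposite dilaton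
couplings `±λ` in `D = d + 1` spacetime dimensions is `λ_c = 2/√(d(d−1))`. -/
theorem subcritical_two_one_forms_opposite (d : ℕ) (hd : 3 ≤ d) (lam : ℝ) :
    (∃ (p : Fin d → ℝ) (A : ℝ),
      Monotone p ∧
      (∑ i, p i) = 1 ∧
      (∑ i, (p i) ^ 2) + A ^ 2 = 1 ∧
      p ⟨0, by omega⟩ - (lam / 2) * A > 0 ∧
      p ⟨0, by omega⟩ + (lam / 2) * A > 0) ↔
    |lam| < 2 / Real.sqrt (d * (d - 1)) := by
  have hx3 : (3 : ℝ) ≤ (d : ℝ) := by exact_mod_cast hd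
  set x : ℝ := (d : ℝ) with hxdef
  have hx0 : 0 < x := by linarith
  have hx1 : 0 < x - 1 := by linarith
  have hxx : 0 < x * (x - 1) := mul_pos hx0 hx1
  have hsq : Real.sqrt (x * (x - 1)) > 0 := Real.sqrt_pos.mpr hxx
  have hsqsq : (Real.sqrt (x * (x - 1))) ^ 2 = x * (x - 1) := Real.sq_sqrt hxx.le
  constructor
  · rintro ⟨p, A, hmono, hsum, hS, h1, h2⟩
    set p0 : ℝ := p ⟨0, by omega⟩ with hp0def
    have hp0pos : 0 < p0 := by nlinarith
    have hple : ∀ i : Fin d, p0 ≤ p i := by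
      intro i
      exact hmono (by simp [Fin.le_def])
    -- d * p0 ≤ 1
    have hdp0 : x * p0 ≤ 1 := by
      have : ∑ _i : Fin d, p0 ≤ ∑ i, p i := Finset.sum_le_sum fun i _ => hple i
      simpa [hsum, Finset.sum_const, mul_comm] using this
    -- sum of squares of q_i ≤ square of sum
    have hq : ∑ i, (p i - p0) ^ 2 ≤ (∑ i, (p i - p0)) ^ 2 :=
      Finset.sum_sq_le_sq_sum_of_nonneg fun i _ => by linarith [hple i]
    have e1 : ∑ i, (p i - p0) = 1 - x * p0 := by
      simp [Finset.sum_sub_distrib, hsum, Finset.sum_const, mul_comm]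
      exact Or.inl hxdef.symm
    have e2 : ∑ i, (p i - p0) ^ 2 = (∑ i, (p i) ^ 2) - 2 * p0 * 1 + x * p0 ^ 2 := by
      rw [← hsum, Finset.mul_sum]
      rw [show x * p0 ^ 2 = ∑ _i : Fin d, p0 ^ 2 by
        simp [Finset.sum_const, mul_comm]; exact Or.inl hxdef]
      rw [← Finset.sum_sub_distrib, ← Finset.sum_add_distrib]
      exact Finset.sum_congr rfl fun i _ => by ring
    rw [e1, e2] at hq
    have key : x * (x - 1) * p0 ^ 2 ≤ A ^ 2 := by
      nlinarith [mul_nonneg (mul_nonneg hx1.le hp0pos.le)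
        (by linarith : (0:ℝ) ≤ 1 - x * p0)]
    have hA2 : 0 < A ^ 2 := lt_of_lt_of_le (by positivity) key
    have hp2 : (lam / 2 * A) ^ 2 < p0 ^ 2 := by nlinarith
    have hmain : lam ^ 2 * (x * (x - 1)) < 4 := by
      have t1 : x * (x - 1) * ((lam / 2 * A) ^ 2) < x * (x - 1) * p0 ^ 2 :=
        (mul_lt_mul_iff_right₀ hxx).mpr hp2
      have t2 : lam ^ 2 * (x * (x - 1)) * A ^ 2 < 4 * A ^ 2 := by nlinarith
      exact lt_of_mul_lt_mul_right t2 hA2.le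
    have : |lam| ^ 2 < (2 / Real.sqrt (x * (x - 1))) ^ 2 := by
      rw [sq_abs, div_pow, hsqsq]
      rw [lt_div_iff₀ hxx]
      linarith
    exact lt_of_pow_lt_pow_left₀ 2 (by positivity) this
  · intro hlam
    have hlam2 : lam ^ 2 * (x * (x - 1)) < 4 := by
      have h1 : |lam| ^ 2 < (2 / Real.sqrt (x * (x - 1))) ^ 2 :=
        pow_lt_pow_left₀ hlam (abs_nonneg _) two_ne_zero
      rw [sq_abs, div_pow, hsqsq, lt_div_iff₀ hxx] at h1
      linarith
    refine ⟨fun _ => 1 / x, Real.sqrt ((x - 1) / x), monotone_const, ?_, ?_, ?_, ?_⟩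
    · simp [Finset.sum_const, mul_comm]
      field_simp
      exact hxdef.symm
    · rw [Real.sq_sqrt (by positivity)]
      simp [Finset.sum_const]
      field_simp
      ring
    all_goals {
      have hA2 : (Real.sqrt ((x - 1) / x)) ^ 2 = (x - 1) / x :=
        Real.sq_sqrt (by positivity)
      have habs : |(lam / 2) * Real.sqrt ((x - 1) / x)| < 1 / x := by
        have hsq2 : ((lam / 2) * Real.sqrt ((x - 1) / x)) ^ 2 < (1 / x) ^ 2 := by
          rw [mul_pow, hA2, div_pow, div_pow, div_mul_div_comm, one_pow,
            div_lt_div_iff₀ (by positivity) (by positivity)]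
          nlinarith [mul_lt_mul_of_pos_left hlam2 hx0]
        exact lt_of_pow_lt_pow_left₀ 2 (by positivity) (by rwa [← sq_abs] at hsq2)
      have := abs_lt.mp habs
      linarith [this.1, this.2]
    }
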